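/- Let S be an abstract numeration system and Y ⊆ ℕ^ℕ. Then Y is weakly S-codable if and only if P_v(Y) is S-recognizable for every finite word v of positive integers. -/

import Mathlib

open scoped BigOperators

/-- A language is regular if it is accepted by a DFA with finitely many states. -/
def IsRegularLang {α : Type*} (L : Set (List α)) : Prop :=
  ∃ (σ : Type) (_ : Fintype σ) (M : DFA α σ), ∀ w : List α, w ∈ M.accepts ↔ w ∈ L

/-- Pad a word over `A` to length `M` by prepending the padding symbol `none`. -/
def padOne {A : Type*} (M : ℕ) (w : List A) : List (Option A) :=
  List.replicate (M - w.length) none ++ w.map some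

/-- The padded form of a `d`-tuple of words over `A`, as a word over `(A ∪ {#})^d`. -/
def padTuple {A : Type*} {d : ℕ} (ws : Fin d → List A) : List (Fin d → Option A) :=
  List.ofFn fun j : Fin (Finset.univ.sup fun i : Fin d => (ws i).length) =>
    fun i : Fin d =>
      (padOne (Finset.univ.sup fun i : Fin d => (ws i).length) (ws i)).getD j.val none

/-- An abstract numeration system over the alphabet `A`, encoded by the order isomorphism
`rep : ℕ → L ⊆ A*` enumerating its (infinite) language in increasing order. -/
structure ANS (A : Type*) where
  rep : ℕ → List A
  inj : Function.Injective rep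

/-- A set `Y ⊆ ℕ^d` is `S`-recognizable if the padded representations of its members form
a regular language. -/
def ANS.Recognizable {A : Type*} (S : ANS A) {d : ℕ} (Y : Set (Fin d → ℕ)) : Prop :=
  IsRegularLang { w : List (Fin d → Option A) | ∃ t ∈ Y, w = padTuple fun i => S.rep (t i) }

/-- An ANS is addable if the graph of addition is `S`-recognizable. -/
def ANS.Addable {A : Type*} (S : ANS A) : Prop :=
  S.Recognizable { t : Fin 3 → ℕ | t 0 + t 1 = t 2 }

/-- An ANS is comparable if the relation `≤` is `S`-recognizable. -/
def ANS.Comparable {A : Type*} (S : ANS A) : Prop :=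
  S.Recognizable { t : Fin 2 → ℕ | t 0 ≤ t 1 }

/-- An ANS is regular if `ℕ` (i.e. its language) is `S`-recognizable. -/
def ANS.IsRegularANS {A : Type*} (S : ANS A) : Prop :=
  S.Recognizable (Set.univ : Set (Fin 1 → ℕ))

/-- The unary ANS, with language `0*` ordered by length. -/
def unaryANS : ANS Unit where
  rep := fun n => List.replicate n ()
  inj := fun m n h => by simpa using congrArg List.length h

/-- `x` is `S`-automatic: some DFAO outputs `x n` on input `rep_S n`. -/
def SAutomatic {A C : Type*} (S : ANS A) (x : ℕ → C) : Prop :=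
  ∃ (Q : Type) (_ : Fintype Q) (M : DFA A Q) (τ : Q → C),
    ∀ n : ℕ, τ (M.eval (S.rep n)) = x n

/-- The shift map on one-sided infinite words. -/
def shiftMap {C : Type*} (x : ℕ → C) : ℕ → C := fun n => x (n + 1)

/-- The orbit closure of `x` (closure in the product topology over the discrete alphabet):
`y` belongs to it iff every finite prefix of `y` occurs in `x`. -/
def orbitClosure {C : Type*} (x : ℕ → C) : Set (ℕ → C) :=
  { y | ∀ n : ℕ, ∃ m : ℕ, ∀ i < n, y i = x (m + i) }

/-- A subshift: a shift-invariant subset of `C^ℕ` that is closed in the product topology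
over the discrete alphabet (expressed combinatorially). -/
def IsSubshift {C : Type*} (X : Set (ℕ → C)) : Prop :=
  (∀ x ∈ X, shiftMap x ∈ X) ∧
  ∀ y : ℕ → C, (∀ n : ℕ, ∃ x ∈ X, ∀ i < n, y i = x i) → y ∈ X

/-- The language of a set of infinite words: all finite factors of its elements. -/
def LangOf {C : Type*} (X : Set (ℕ → C)) : Set (List C) :=
  { w | ∃ x ∈ X, ∃ p : ℕ, w = List.ofFn fun i : Fin w.length => x (p + i) }

/-- A word is right special in (the language of) `X` if it has two distinct one-letter
extensions in the language of `X`. -/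
def RightSpecial {C : Type*} (X : Set (ℕ → C)) (w : List C) : Prop :=
  ∃ a b : C, a ≠ b ∧ w ++ [a] ∈ LangOf X ∧ w ++ [b] ∈ LangOf X

/-- The factor complexity of `x`: the number of distinct factors of length `n`. -/
noncomputable def factorComplexity {C : Type*} (x : ℕ → C) (n : ℕ) : ℕ :=
  Set.ncard { w : List C | ∃ p : ℕ, w = List.ofFn fun i : Fin n => x (p + i) }

/-- `T` is a strategy tree witnessing `α ∈ W(X)`: a prefix-closed set of finite words
containing the empty word, in which every word of length `i` has exactly `α i + 1`
one-letter extensions, and all whose infinite branches lie in `X`. -/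
def IsStrategyTree {C : Type*} (X : Set (ℕ → C)) (α : ℕ → ℕ) (T : Set (List C)) : Prop :=
  ([] : List C) ∈ T ∧
  (∀ u v : List C, u ++ v ∈ T → u ∈ T) ∧
  (∀ w ∈ T, Set.ncard { c : C | w ++ [c] ∈ T } = α w.length + 1) ∧
  (∀ y : ℕ → C, (∀ n : ℕ, (List.ofFn fun i : Fin n => y i) ∈ T) → y ∈ X)

/-- The winning shift of `X ⊆ C^ℕ`, a subset of `ℕ^ℕ`. -/
def winningShift {C : Type*} (X : Set (ℕ → C)) : Set (ℕ → ℕ) :=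
  { α | ∃ T : Set (List C), IsStrategyTree X α T }

/-- Membership in the winning set of a set `X` of finite words, defined recursively:
`ε ∈ W(X)` iff `ε ∈ X`, and `a :: α ∈ W(X)` iff there is a set of `a + 1` letters `c`
such that `α` is in the winning set of the left quotient of `X` by `c`. -/
def winningSetMem {C : Type*} : List ℕ → Set (List C) → Prop
  | [], X => [] ∈ X
  | a :: α, X => ∃ S : Finset C, S.card = a + 1 ∧ ∀ c ∈ S, winningSetMem α { w | c :: w ∈ X }

/-- `Σ y = m`: the sum of the letters of `y ∈ ℕ^ℕ` is finite and equals `m`. -/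
def sumEq (y : ℕ → ℕ) (m : ℕ) : Prop :=
  (Function.support y).Finite ∧ ∑ᶠ i, y i = m

/-- `Y ⊆ ℕ^ℕ` has finite coding dimension: the sums `Σ y`, `y ∈ Y`, are uniformly bounded. -/
def FiniteCodingDim (Y : Set (ℕ → ℕ)) : Prop :=
  ∃ d : ℕ, ∀ y ∈ Y, ∀ F : Finset ℕ, ∑ i ∈ F, y i ≤ d

/-- The set `{ν(y) : y ∈ Y, Σy = k} ⊆ ℕᵏ`: nondecreasing `k`-tuples `t` such that the word
whose letter at `j` is the number of occurrences of `j` in `t` belongs to `Y`. -/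
def nuSet (Y : Set (ℕ → ℕ)) (k : ℕ) : Set (Fin k → ℕ) :=
  { t | Monotone t ∧ (fun j => Set.ncard { i : Fin k | t i = j }) ∈ Y }

/-- `Y ⊆ ℕ^ℕ` is weakly `S`-codable if `{ν(y) : y ∈ Y, Σy = k}` is `S`-recognizable for
every `k`. -/
def WeaklySCodable {A : Type*} (S : ANS A) (Y : Set (ℕ → ℕ)) : Prop :=
  ∀ k : ℕ, S.Recognizable (nuSet Y k)

/-- `Y ⊆ ℕ^ℕ` is `S`-codable if it is weakly `S`-codable and has finite coding dimension. -/
def SCodable {A : Type*} (S : ANS A) (Y : Set (ℕ → ℕ)) : Prop :=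
  WeaklySCodable S Y ∧ FiniteCodingDim Y

/-- `P_{111}(Y)`: strictly increasing triples `(a, b, c)` such that the word with letter `1`
exactly at positions `a`, `b`, `c` and `0` elsewhere belongs to `Y`. -/
def P111 (Y : Set (ℕ → ℕ)) : Set (Fin 3 → ℕ) :=
  { t | t 0 < t 1 ∧ t 1 < t 2 ∧
        (fun j => if j = t 0 ∨ j = t 1 ∨ j = t 2 then 1 else 0) ∈ Y }

/-- `P_v(Y)` for a finite word `v` over `ℕ`: strictly increasing tuples `n` such that the
word with letter `v i` at position `n i` and `0` elsewhere belongs to `Y`. -/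
def PvSet (v : List ℕ) (Y : Set (ℕ → ℕ)) : Set (Fin v.length → ℕ) :=
  { n | StrictMono n ∧
        (fun j => ∑ i : Fin v.length, if n i = j then v.get i else 0) ∈ Y }

/-- `X` is sofic: the set of label sequences of right-infinite paths in a finite
edge-labeled graph. -/
def IsSofic {C : Type*} (X : Set (ℕ → C)) : Prop :=
  ∃ (V : Type) (_ : Fintype V) (E : Set (V × C × V)),
    X = { x | ∃ p : ℕ → V, ∀ n : ℕ, (p n, x n, p (n + 1)) ∈ E }

/-- The factor `x[a..b-1]` of an infinite word. -/
def segmentOf {C : Type*} (x : ℕ → C) (a b : ℕ) : List C :=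
  List.ofFn fun i : Fin (b - a) => x (a + i)

/-- `U · V^ω`: infinite words that decompose as a word of `U` followed by infinitely many
nonempty words of `V`. -/
def omegaIter {C : Type*} (U V : Set (List C)) : Set (ℕ → C) :=
  { x | ∃ k : ℕ → ℕ, StrictMono k ∧ segmentOf x 0 (k 0) ∈ U ∧
        ∀ i : ℕ, segmentOf x (k i) (k (i + 1)) ∈ V }

/-- `X ⊆ C^ℕ` is ω-regular: a finite union of sets `U · V^ω` with `U`, `V` regular. -/
def IsOmegaRegular {C : Type*} (X : Set (ℕ → C)) : Prop :=
  ∃ (n : ℕ) (U V : Fin n → Set (List C)),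
    (∀ i, IsRegularLang (U i) ∧ IsRegularLang (V i)) ∧
    X = ⋃ i, omegaIter (U i) (V i)

/-- The words `p₁ = a`, `p_{k+1} = p_k bᵏ p_k` (with `a = false`, `b = true`). -/
def pWord : ℕ → List Bool
  | 0 => []
  | 1 => [false]
  | (k + 2) => pWord (k + 1) ++ List.replicate (k + 1) true ++ pWord (k + 1)

/-- Combinatorial continuity of `φ` on `Y` for product topologies over discrete alphabets:
every finite prefix of `φ y` is determined by a finite prefix of `y`. -/
def ContOn {B C : Type*} (φ : (ℕ → B) → (ℕ → C)) (Y : Set (ℕ → B)) : Prop :=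
  ∀ y ∈ Y, ∀ n : ℕ, ∃ m : ℕ, ∀ y' ∈ Y, (∀ i < m, y' i = y i) → ∀ i < n, φ y' i = φ y i

/-! ### Auxiliary machinery -/

section AuxAut
open Classical
variable {α β : Type*}

lemma isRegular_congr {L L' : Set (List α)} (h : IsRegularLang L) (e : ∀ w, w ∈ L ↔ w ∈ L') :
    IsRegularLang L' := by
  obtain ⟨σ, i, M, hM⟩ := h
  exact ⟨σ, i, M, fun w => (hM w).trans (e w)⟩

lemma isRegular_empty : IsRegularLang (∅ : Set (List α)) := by
  refine ⟨Unit, inferInstance, ⟨fun _ _ => (), (), ∅⟩, fun w => ?_⟩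
  simp [DFA.mem_accepts]

lemma isRegular_preimage_map (φ : α → β) {L : Set (List β)} (h : IsRegularLang L) :
    IsRegularLang {w : List α | w.map φ ∈ L} := by
  obtain ⟨σ, i, M, hM⟩ := h
  refine ⟨σ, i, ⟨fun s a => M.step s (φ a), M.start, M.accept⟩, fun w => ?_⟩
  have : ∀ (s : σ), DFA.evalFrom ⟨fun s a => M.step s (φ a), M.start, M.accept⟩ s w
      = M.evalFrom s (w.map φ) := by
    intro s
    simp [DFA.evalFrom, List.foldl_map]
  simp only [DFA.mem_accepts, DFA.eval, this, Set.mem_setOf_eq]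
  exact hM _

lemma isRegular_iUnion {ι : Type} [Fintype ι] {L : ι → Set (List α)}
    (h : ∀ i, IsRegularLang (L i)) : IsRegularLang (⋃ i, L i) := by
  choose σ inst M hM using h
  refine ⟨∀ i, σ i, by exact Pi.instFintype,
    ⟨fun s a i => (M i).step (s i) a, fun i => (M i).start, {s | ∃ i, s i ∈ (M i).accept}⟩,
    fun w => ?_⟩
  have key : ∀ (s : ∀ i, σ i) (i : ι),
      (w.foldl (fun s a i => (M i).step (s i) a) s) i = (w.foldl (M i).step (s i)) := by
    induction w with
    | nil => intro s i; rfl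
    | cons a w ih => intro s i; exact ih _ i
  simp only [DFA.mem_accepts, DFA.eval, DFA.evalFrom, Set.mem_setOf_eq, key, Set.mem_iUnion]
  constructor
  · rintro ⟨i, hi⟩; exact ⟨i, (hM i w).mp hi⟩
  · rintro ⟨i, hi⟩; exact ⟨i, (hM i w).mpr hi⟩

lemma isRegular_inter {L L' : Set (List α)} (h : IsRegularLang L) (h' : IsRegularLang L') :
    IsRegularLang (L ∩ L') := by
  obtain ⟨σ, i, M, hM⟩ := h
  obtain ⟨σ', i', M', hM'⟩ := h'
  refine ⟨σ × σ', by exact instFintypeProd σ σ',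
    ⟨fun s a => (M.step s.1 a, M'.step s.2 a), (M.start, M'.start),
      {s | s.1 ∈ M.accept ∧ s.2 ∈ M'.accept}⟩, fun w => ?_⟩
  have key : ∀ (s : σ × σ'),
      (w.foldl (fun (s : σ × σ') a => (M.step s.1 a, M'.step s.2 a)) s)
        = (w.foldl M.step s.1, w.foldl M'.step s.2) := by
    induction w with
    | nil => intro s; rfl
    | cons a w ih => intro s; exact ih _
  simp only [DFA.mem_accepts, DFA.eval, DFA.evalFrom, Set.mem_setOf_eq, key, Set.mem_inter_iff]
  rw [← hM w, ← hM' w]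
  rfl

lemma isRegular_image_map (φ : α → β) {L : Set (List α)} (h : IsRegularLang L) :
    IsRegularLang {w : List β | ∃ u ∈ L, w = u.map φ} := by
  obtain ⟨σ, i, M, hM⟩ := h
  set N : NFA β σ := ⟨fun q b => {q' | ∃ a, φ a = b ∧ q' = M.step q a}, {M.start}, M.accept⟩
    with hN
  have key : ∀ (w : List β) (S : Set σ) (q' : σ),
      q' ∈ N.evalFrom S w ↔ ∃ q ∈ S, ∃ u : List α, u.map φ = w ∧ q' = M.evalFrom q u := by
    intro w
    induction w with
    | nil =>
      intro S q'
      simp only [NFA.evalFrom, List.foldl_nil]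
      constructor
      · intro hq; exact ⟨q', hq, [], rfl, rfl⟩
      · rintro ⟨q, hq, u, hu, rfl⟩
        rw [List.map_eq_nil_iff] at hu
        subst hu; exact hq
    | cons b w ih =>
      intro S q'
      show q' ∈ N.evalFrom (N.stepSet S b) w ↔ _
      rw [ih]
      constructor
      · rintro ⟨q1, hq1, u, hu, rfl⟩
        simp only [NFA.stepSet, Set.mem_iUnion, hN] at hq1
        obtain ⟨q, hq, a, ha, rfl⟩ := hq1
        exact ⟨q, hq, a :: u, by simp [ha, hu], rfl⟩
      · rintro ⟨q, hq, u, hu, rfl⟩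
        cases u with
        | nil => simp at hu
        | cons a u =>
          simp only [List.map_cons, List.cons.injEq] at hu
          refine ⟨M.step q a, ?_, u, hu.2, rfl⟩
          simp only [NFA.stepSet, Set.mem_iUnion, hN]
          exact ⟨q, hq, a, hu.1, rfl⟩
  refine ⟨Set σ, by infer_instance, N.toDFA, fun w => ?_⟩
  have hc : w ∈ N.toDFA.accepts ↔ w ∈ N.accepts := by rw [NFA.toDFA_correct]
  rw [hc]
  simp only [NFA.mem_accepts, Set.mem_setOf_eq]
  constructor
  · rintro ⟨q', hacc, hq'⟩
    rw [key] at hq'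
    obtain ⟨q, hq, u, hu, rfl⟩ := hq'
    simp only [hN, Set.mem_singleton_iff] at hq
    subst hq
    exact ⟨u, (hM u).mp (DFA.mem_accepts M |>.mpr hacc), hu.symm⟩
  · rintro ⟨u, huL, rfl⟩
    refine ⟨M.eval u, (DFA.mem_accepts M).mp ((hM u).mpr huL), ?_⟩
    rw [key]
    exact ⟨M.start, rfl, u, rfl, rfl⟩

lemma isRegular_forall_exists {ι : Type} [Fintype ι] (P : ι → α → Prop) :
    IsRegularLang {w : List α | ∀ j : ι, ∃ a ∈ w, P j a} := by
  refine ⟨ι → Bool, by exact Pi.instFintype,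
    ⟨fun s a j => s j || decide (P j a), fun _ => false, {s | ∀ j, s j = true}⟩, fun w => ?_⟩
  have key : ∀ (s : ι → Bool) (j : ι),
      ((w.foldl (fun s a j => s j || decide (P j a)) s) j = true) ↔
        (s j = true ∨ ∃ a ∈ w, P j a) := by
    induction w with
    | nil => intro s j; simp
    | cons a w ih =>
      intro s j
      simp only [List.foldl_cons, ih, Bool.or_eq_true, decide_eq_true_eq, List.mem_cons]
      constructor
      · rintro (⟨h | h⟩ | ⟨b, hb, hP⟩)
        · exact Or.inl h
        · exact Or.inr ⟨a, Or.inl rfl, h⟩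
        · exact Or.inr ⟨b, Or.inr hb, hP⟩
      · rintro (h | ⟨b, rfl | hb, hP⟩)
        · exact Or.inl (Or.inl h)
        · exact Or.inl (Or.inr hP)
        · exact Or.inr ⟨b, hb, hP⟩
  simp only [DFA.mem_accepts, DFA.eval, DFA.evalFrom, Set.mem_setOf_eq, key]
  constructor
  · intro h j; rcases h j with h | h
    · simp at h
    · exact h
  · intro h j; exact Or.inr (h j)

end AuxAut

section AuxPad
open Classical
variable {A : Type*} {d : ℕ}

def mx (ws : Fin d → List A) : ℕ := Finset.univ.sup fun i : Fin d => (ws i).length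

lemma length_le_mx (ws : Fin d → List A) (i : Fin d) : (ws i).length ≤ mx ws :=
  Finset.le_sup (f := fun i => (ws i).length) (Finset.mem_univ i)

lemma padOne_length {M : ℕ} {w : List A} (h : w.length ≤ M) : (padOne M w).length = M := by
  simp [padOne]; omega

lemma padOne_filterMap (M : ℕ) (w : List A) : (padOne M w).filterMap id = w := by
  simp [padOne, List.filterMap_append, List.filterMap_map]

lemma padOne_inj {M : ℕ} {w w' : List A} (h : padOne M w = padOne M w') : w = w' := by
  have := congrArg (List.filterMap id) h
  rwa [padOne_filterMap, padOne_filterMap] at this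

lemma padTuple_length (ws : Fin d → List A) : (padTuple ws).length = mx ws := by
  simp [padTuple, mx]

lemma padTuple_getElem (ws : Fin d → List A) (p : ℕ) (hp : p < (padTuple ws).length)
    (i : Fin d) : (padTuple ws)[p] i = (padOne (mx ws) (ws i)).getD p none := by
  rw [padTuple_length] at hp
  have := List.getElem_ofFn (i := p)
    (f := fun j : Fin (mx ws) => fun i : Fin d => (padOne (mx ws) (ws i)).getD j.val none)
    (by simpa using hp)
  exact congrFun this i

lemma padOne_eq_iff_getD {M : ℕ} {w w' : List A} (hw : w.length ≤ M) (hw' : w'.length ≤ M) :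
    w = w' ↔ ∀ p < M, (padOne M w).getD p none = (padOne M w').getD p none := by
  constructor
  · rintro rfl p _; rfl
  · intro h
    apply padOne_inj (M := M)
    apply List.ext_getElem (by rw [padOne_length hw, padOne_length hw'])
    intro p h1 h2
    have hp : p < M := by rwa [padOne_length hw] at h1
    have := h p hp
    rwa [List.getD_eq_getElem _ _ h1, List.getD_eq_getElem _ _ h2] at this

lemma mx_comp_surj {d' : ℕ} (ws : Fin d' → List A) (g : Fin d → Fin d')
    (hg : Function.Surjective g) : mx (ws ∘ g) = mx ws := by
  apply le_antisymm
  · exact Finset.sup_le fun i _ => length_le_mx ws (g i)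
  · apply Finset.sup_le
    intro j _
    obtain ⟨i, rfl⟩ := hg j
    exact Finset.le_sup (f := fun i => ((ws ∘ g) i).length) (Finset.mem_univ i)

lemma map_padTuple {d' : ℕ} (ws : Fin d' → List A) (g : Fin d → Fin d')
    (hg : Function.Surjective g) :
    (padTuple ws).map (fun f => f ∘ g) = padTuple (ws ∘ g) := by
  apply List.ext_getElem
  · simp [padTuple_length, mx_comp_surj ws g hg]
  · intro p h1 h2
    funext i
    rw [List.getElem_map]
    have h1' : p < (padTuple ws).length := by simpa using h1
    show (padTuple ws)[p] (g i) = _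
    rw [padTuple_getElem ws p h1' (g i), padTuple_getElem (ws ∘ g) p h2 i,
      mx_comp_surj ws g hg]
    rfl

lemma padTuple_exists_ne (ws : Fin d → List A) {j1 j2 : Fin d}
    (h : ws j1 ≠ ws j2) : ∃ a ∈ padTuple ws, a j1 ≠ a j2 := by
  by_contra hcon
  push_neg at hcon
  apply h
  rw [padOne_eq_iff_getD (M := mx ws) (length_le_mx ws j1) (length_le_mx ws j2)]
  intro p hp
  have hp' : p < (padTuple ws).length := by rw [padTuple_length]; exact hp
  have := hcon _ (List.getElem_mem hp')
  rw [padTuple_getElem ws p hp' j1, padTuple_getElem ws p hp' j2] at this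
  exact this

lemma padTuple_ne_of_mem (ws : Fin d → List A) {j1 j2 : Fin d}
    {a : Fin d → Option A} (ha : a ∈ padTuple ws) (hne : a j1 ≠ a j2) : ws j1 ≠ ws j2 := by
  intro heq
  apply hne
  obtain ⟨p, hp, rfl⟩ := List.getElem_of_mem ha
  rw [padTuple_getElem ws p hp j1, padTuple_getElem ws p hp j2, heq]

end AuxPad

section Blk
variable {v : List ℕ}

/-- prefix sums -/
def prefS (v : List ℕ) (j : ℕ) : ℕ := (v.take j).sum

lemma prefS_zero : prefS v 0 = 0 := rfl

lemma prefS_succ {j : ℕ} (h : j < v.length) :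
    prefS v (j + 1) = prefS v j + v.get ⟨j, h⟩ := by
  simpa [prefS] using List.sum_take_succ v j h

lemma prefS_mono : Monotone (prefS v) := by
  intro a b hab
  have h : v.take a = (v.take b).take a := by rw [List.take_take, Nat.min_eq_left hab]
  rw [prefS, prefS, h]
  exact List.Sublist.sum_le_sum (List.take_sublist a (v.take b)) (fun x _ => Nat.zero_le x)

lemma prefS_length : prefS v v.length = v.sum := by simp [prefS]

lemma prefS_le_sum (j : ℕ) : prefS v j ≤ v.sum := by
  simpa [prefS] using List.Sublist.sum_le_sum (List.take_sublist j v) (fun _ _ => Nat.zero_le _)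

lemma prefS_lt_succ (hv : ∀ a ∈ v, 0 < a) {j : ℕ} (h : j < v.length) :
    prefS v j < prefS v (j + 1) := by
  rw [prefS_succ h]
  have : 0 < v.get ⟨j, h⟩ := hv _ (List.get_mem v ⟨j, h⟩)
  omega

lemma prefS_mono_strict (hv : ∀ a ∈ v, 0 < a) {j j' : ℕ} (hj : j < j') (h' : j' ≤ v.length) :
    prefS v j < prefS v j' := by
  have h1 : prefS v (j + 1) ≤ prefS v j' := prefS_mono hj
  exact lt_of_lt_of_le (prefS_lt_succ hv (lt_of_lt_of_le hj h')) h1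

/-- block index -/
def blk (v : List ℕ) (p : ℕ) : ℕ :=
  ((Finset.range v.length).filter (fun j => prefS v (j + 1) ≤ p)).card

lemma blk_eq (hv : ∀ a ∈ v, 0 < a) {j p : ℕ} (hj : j < v.length)
    (h1 : prefS v j ≤ p) (h2 : p < prefS v (j + 1)) : blk v p = j := by
  have : (Finset.range v.length).filter (fun j' => prefS v (j' + 1) ≤ p) = Finset.range j := by
    ext j'
    simp only [Finset.mem_filter, Finset.mem_range]
    constructor
    · rintro ⟨hj', hle⟩
      by_contra hcon
      push_neg at hcon
      have : prefS v (j + 1) ≤ prefS v (j' + 1) := prefS_mono (by omega)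
      omega
    · intro hlt
      refine ⟨by omega, ?_⟩
      have : prefS v (j' + 1) ≤ prefS v j := prefS_mono (by omega)
      omega
  rw [blk, this, Finset.card_range]

lemma blk_spec (hv : ∀ a ∈ v, 0 < a) {p : ℕ} (hp : p < v.sum) :
    blk v p < v.length ∧ prefS v (blk v p) ≤ p ∧ p < prefS v (blk v p + 1) := by
  set j₀ := Nat.findGreatest (fun j => prefS v j ≤ p) v.length with hj₀
  have hspec : prefS v j₀ ≤ p := by
    have := Nat.findGreatest_spec (P := fun j => prefS v j ≤ p) (n := v.length)
      (Nat.zero_le _) (by simp [prefS_zero])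
    rwa [← hj₀] at this
  have hlt : j₀ < v.length := by
    rcases Nat.lt_or_ge j₀ v.length with h | h
    · exact h
    · exfalso
      have : j₀ ≤ v.length := Nat.findGreatest_le _
      have : j₀ = v.length := by omega
      rw [this, prefS_length] at hspec; omega
  have hgt : ¬ prefS v (j₀ + 1) ≤ p := by
    apply Nat.findGreatest_is_greatest (P := fun j => prefS v j ≤ p) (n := v.length)
    · rw [← hj₀]; omega
    · omega
  have hblk : blk v p = j₀ := blk_eq hv hlt hspec (by omega)
  rw [hblk]; exact ⟨hlt, hspec, by omega⟩

lemma blk_mono : Monotone (blk v) := by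
  intro p q hpq
  apply Finset.card_le_card
  intro j hj
  simp only [Finset.mem_filter] at *
  exact ⟨hj.1, le_trans hj.2 hpq⟩

lemma blk_prefS (hv : ∀ a ∈ v, 0 < a) {j : ℕ} (hj : j < v.length) : blk v (prefS v j) = j :=
  blk_eq hv hj le_rfl (prefS_lt_succ hv hj)

/-- The block map as a map of Fin types. -/
def gmap (v : List ℕ) (hv : ∀ a ∈ v, 0 < a) (p : Fin v.sum) : Fin v.length :=
  ⟨blk v p.val, (blk_spec hv p.2).1⟩

lemma gmap_mono (hv : ∀ a ∈ v, 0 < a) : Monotone (gmap v hv) :=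
  fun p q hpq => blk_mono hpq

def secmap (v : List ℕ) (hv : ∀ a ∈ v, 0 < a) (j : Fin v.length) : Fin v.sum :=
  ⟨prefS v j.val, lt_of_lt_of_le (prefS_mono_strict hv j.2 le_rfl) (le_of_eq prefS_length)⟩

lemma gmap_secmap (hv : ∀ a ∈ v, 0 < a) (j : Fin v.length) :
    gmap v hv (secmap v hv j) = j := by
  apply Fin.ext
  exact blk_prefS hv j.2

lemma secmap_mono (hv : ∀ a ∈ v, 0 < a) : Monotone (secmap v hv) :=
  fun a b hab => prefS_mono hab

lemma gmap_surj (hv : ∀ a ∈ v, 0 < a) : Function.Surjective (gmap v hv) :=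
  fun j => ⟨secmap v hv j, gmap_secmap hv j⟩

lemma gmap_fiber_card (hv : ∀ a ∈ v, 0 < a) (j : Fin v.length) :
    (Finset.univ.filter fun p : Fin v.sum => gmap v hv p = j).card = v.get j := by
  have hmem : ∀ p : Fin v.sum, gmap v hv p = j ↔ prefS v j.val ≤ p.val ∧ p.val < prefS v (j.val + 1) := by
    intro p
    constructor
    · intro h
      obtain ⟨h1, h2, h3⟩ := blk_spec hv p.2
      have : blk v p.val = j.val := congrArg Fin.val h
      rw [this] at h2 h3
      exact ⟨h2, h3⟩
    · rintro ⟨h1, h2⟩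
      exact Fin.ext (blk_eq hv j.2 h1 h2)
  have : (Finset.univ.filter fun p : Fin v.sum => gmap v hv p = j).card
      = (Finset.Ico (prefS v j.val) (prefS v (j.val + 1))).card := by
    apply Finset.card_bij (fun p _ => p.val)
    · intro p hp
      simp only [Finset.mem_filter, Finset.mem_univ, true_and] at hp
      rw [hmem] at hp
      simp [Finset.mem_Ico, hp.1, hp.2]
    · intro p _ q _ h
      exact Fin.ext h
    · intro q hq
      simp only [Finset.mem_Ico] at hq
      have hs : prefS v (j.val + 1) ≤ v.sum := prefS_le_sum _
      have hqlt : q < v.sum := by omega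
      refine ⟨⟨q, hqlt⟩, ?_, rfl⟩
      simp only [Finset.mem_filter, Finset.mem_univ, true_and]
      rw [hmem]
      exact hq
  rw [this, Nat.card_Ico, prefS_succ j.2, Fin.eta]
  omega

end Blk

section Count
open Classical
variable {k : ℕ}

lemma ncard_filter (P : Fin k → Prop) :
    Set.ncard {i : Fin k | P i} = (Finset.univ.filter P).card := by
  rw [← Set.ncard_coe_finset]
  congr 1
  ext i
  simp

lemma count_fiber {v : List ℕ} (hv : ∀ a ∈ v, 0 < a) (n : Fin v.length → ℕ) (c : ℕ) :
    (Finset.univ.filter fun i : Fin v.sum => n (gmap v hv i) = c).card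
      = ∑ j : Fin v.length, if n j = c then v.get j else 0 := by
  rw [← Finset.sum_filter]
  rw [Finset.card_eq_sum_card_fiberwise
    (f := gmap v hv) (t := Finset.univ.filter fun j => n j = c)
    (fun i hi => by
      simp only [Finset.mem_coe, Finset.mem_filter, Finset.mem_univ, true_and] at *
      exact hi)]
  apply Finset.sum_congr rfl
  intro j hj
  simp only [Finset.mem_filter, Finset.mem_univ, true_and] at hj
  rw [← gmap_fiber_card hv j]
  congr 1
  ext i
  simp only [Finset.mem_filter, Finset.mem_univ, true_and]
  constructor
  · rintro ⟨_, h⟩; exact h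
  · rintro rfl; exact ⟨hj, rfl⟩

lemma mono_lt_iff {t : Fin k → ℕ} (ht : Monotone t) (c : ℕ) (i : Fin k) :
    t i < c ↔ i.val < (Finset.univ.filter fun i' => t i' < c).card := by
  constructor
  · intro h
    have hsub : Finset.Iic i ⊆ Finset.univ.filter fun i' => t i' < c := by
      intro j hj
      simp only [Finset.mem_Iic] at hj
      simp only [Finset.mem_filter, Finset.mem_univ, true_and]
      exact lt_of_le_of_lt (ht hj) h
    have := Finset.card_le_card hsub
    rw [Fin.card_Iic] at this
    omega
  · intro h
    by_contra hcon
    push_neg at hcon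
    have hsub : (Finset.univ.filter fun i' => t i' < c) ⊆ Finset.Iio i := by
      intro j hj
      simp only [Finset.mem_filter, Finset.mem_univ, true_and] at hj
      simp only [Finset.mem_Iio]
      by_contra hj2
      push_neg at hj2
      exact absurd (lt_of_le_of_lt (ht hj2) hj) (by omega)
    have := Finset.card_le_card hsub
    rw [Fin.card_Iio] at this
    omega

lemma mono_ext {t t' : Fin k → ℕ} (ht : Monotone t) (ht' : Monotone t')
    (h : ∀ c, (Finset.univ.filter fun i => t i = c).card
            = (Finset.univ.filter fun i => t' i = c).card) : t = t' := by
  have key : ∀ c, (Finset.univ.filter fun i => t i < c).card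
      = (Finset.univ.filter fun i => t' i < c).card := by
    intro c
    have e1 : ∀ (s : Fin k → ℕ), (Finset.univ.filter fun i => s i < c)
        = (Finset.range c).biUnion (fun c' => Finset.univ.filter fun i => s i = c') := by
      intro s
      ext i
      simp only [Finset.mem_filter, Finset.mem_univ, true_and, Finset.mem_biUnion,
        Finset.mem_range]
      constructor
      · intro hi; exact ⟨s i, hi, rfl⟩
      · rintro ⟨c', hc', rfl⟩; exact hc'
    rw [e1 t, e1 t', Finset.card_biUnion, Finset.card_biUnion]
    · exact Finset.sum_congr rfl fun c' _ => h c'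
    · intro x _ y _ hxy
      simp only [Finset.disjoint_filter]
      intro i _ h1 h2
      exact hxy (h1.symm.trans h2)
    · intro x _ y _ hxy
      simp only [Finset.disjoint_filter]
      intro i _ h1 h2
      exact hxy (h1.symm.trans h2)
  funext i
  have h1 : t' i < t i + 1 := (mono_lt_iff ht' (t i + 1) i).mpr
    (by rw [← key]; exact (mono_lt_iff ht _ i).mp (by omega))
  have h2 : t i < t' i + 1 := (mono_lt_iff ht (t' i + 1) i).mpr
    (by rw [key]; exact (mono_lt_iff ht' _ i).mp (by omega))
  omega

lemma decomp {t : Fin k → ℕ} (ht : Monotone t) :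
    ∃ (v : List ℕ) (hv : ∀ a ∈ v, 0 < a) (hs : v.sum = k) (n : Fin v.length → ℕ),
      StrictMono n ∧ ∀ i : Fin v.sum, t (Fin.cast hs i) = n (gmap v hv i) := by
  set D : Finset ℕ := Finset.univ.image t with hD
  set e := D.orderIsoOfFin rfl with he
  set n0 : Fin D.card → ℕ := fun j => (e j : ℕ) with hn0
  have hn0mono : StrictMono n0 := fun a b hab => by
    simpa [hn0] using (e.strictMono hab)
  set v : List ℕ := List.ofFn (fun j : Fin D.card =>
    (Finset.univ.filter fun i : Fin k => t i = n0 j).card) with hvdef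
  have hlen : v.length = D.card := List.length_ofFn
  set n : Fin v.length → ℕ := fun j => n0 (Fin.cast hlen j) with hn
  have hget : ∀ j : Fin v.length,
      v.get j = (Finset.univ.filter fun i : Fin k => t i = n j).card := by
    intro j
    exact List.get_ofFn _ j
  have hmemD : ∀ c, c ∈ D ↔ ∃ j : Fin v.length, n j = c := by
    intro c
    constructor
    · intro hc
      refine ⟨Fin.cast hlen.symm (e.symm ⟨c, hc⟩), ?_⟩
      simp [hn, hn0]
    · rintro ⟨j, rfl⟩
      exact (e _).2
  have hnmono : StrictMono n := fun a b hab => hn0mono (by simpa using hab)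
  have hfibpos : ∀ j : Fin v.length,
      0 < (Finset.univ.filter fun i : Fin k => t i = n j).card := by
    intro j
    rw [Finset.card_pos]
    have : n j ∈ D := (hmemD _).mpr ⟨j, rfl⟩
    rw [hD, Finset.mem_image] at this
    obtain ⟨i, _, hi⟩ := this
    exact ⟨i, by simp [hi]⟩
  have hv : ∀ a ∈ v, 0 < a := by
    intro a ha
    rw [List.mem_iff_get] at ha
    obtain ⟨j, rfl⟩ := ha
    rw [hget]
    exact hfibpos j
  have hs : v.sum = k := by
    have h1 : v.sum = ∑ j : Fin v.length, v.get j := by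
      conv_lhs => rw [← List.ofFn_get v]
      rw [List.sum_ofFn]
    rw [h1]
    have h2 : ∑ j : Fin v.length, v.get j
        = ∑ c ∈ D, (Finset.univ.filter fun i : Fin k => t i = c).card := by
      apply Finset.sum_bij (i := fun j _ => n j)
      · intro j _; exact (hmemD _).mpr ⟨j, rfl⟩
      · intro a _ b _ hab; exact hnmono.injective hab
      · intro c hc
        obtain ⟨j, hj⟩ := (hmemD c).mp hc
        exact ⟨j, Finset.mem_univ _, hj⟩
      · intro j _; exact hget j
    rw [h2]
    have h3 := Finset.card_eq_sum_card_fiberwise (f := t) (s := Finset.univ) (t := D)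
      (fun i _ => by rw [hD]; exact Finset.mem_image_of_mem t (Finset.mem_univ i))
    simpa using h3.symm
  refine ⟨v, hv, hs, n, hnmono, ?_⟩
  -- use mono_ext on Fin v.sum
  have hcast : Monotone (fun i : Fin v.sum => t (Fin.cast hs i)) :=
    fun a b hab => ht (by simpa using hab)
  have hng : Monotone (fun i : Fin v.sum => n (gmap v hv i)) :=
    hnmono.monotone.comp (gmap_mono hv)
  have hfib : ∀ c : ℕ, ∀ i : Fin k, t i = c ↔ ∃ j : Fin v.length, n j = c ∧ t i = n j := by
    intro c i
    constructor
    · rintro rfl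
      have hc : t i ∈ D := by rw [hD]; exact Finset.mem_image_of_mem t (Finset.mem_univ i)
      obtain ⟨j, hj⟩ := (hmemD _).mp hc
      exact ⟨j, hj, hj.symm⟩
    · rintro ⟨j, hj, hij⟩; omega
  have heq : (fun i : Fin v.sum => t (Fin.cast hs i)) = fun i => n (gmap v hv i) := by
    apply mono_ext hcast hng
    intro c
    rw [count_fiber hv n c]
    -- LHS : card over Fin v.sum of t(cast i) = c; equals card over Fin k
    have hL : (Finset.univ.filter fun i : Fin v.sum => t (Fin.cast hs i) = c).card
        = (Finset.univ.filter fun i : Fin k => t i = c).card := by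
      apply Finset.card_bij (fun i _ => Fin.cast hs i)
      · intro i hi
        simp only [Finset.mem_filter, Finset.mem_univ, true_and] at *
        exact hi
      · intro a _ b _ hab
        exact Fin.ext (by simpa using congrArg Fin.val hab)
      · intro i hi
        refine ⟨Fin.cast hs.symm i, ?_, rfl⟩
        simp only [Finset.mem_filter, Finset.mem_univ, true_and] at *
        exact hi
    rw [hL]
    by_cases hcD : c ∈ D
    · obtain ⟨j₀, hj₀⟩ := (hmemD c).mp hcD
      rw [Finset.sum_eq_single j₀]
      · rw [if_pos hj₀, hget, hj₀]
      · intro j _ hne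
        rw [if_neg]
        intro hc
        exact hne (hnmono.injective (by omega))
      · intro h; exact absurd (Finset.mem_univ j₀) h
    · have h0 : (Finset.univ.filter fun i : Fin k => t i = c).card = 0 := by
        rw [Finset.card_eq_zero]
        apply Finset.filter_eq_empty_iff.mpr
        intro i _ hic
        exact hcD ((hmemD c).mpr ((hfib c i).mp hic |>.elim fun j hj => ⟨j, hj.1⟩))
      rw [h0]
      symm
      apply Finset.sum_eq_zero
      intro j _
      rw [if_neg]
      intro hc
      exact hcD ((hmemD c).mpr ⟨j, hc⟩)
  intro i
  exact congrFun heq i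
end Count

section AuxGlue
open Classical

lemma len_le_sum : ∀ {v : List ℕ}, (∀ a ∈ v, 0 < a) → v.length ≤ v.sum := by
  intro v
  induction v with
  | nil => intro _; simp
  | cons a v ih =>
    intro hv
    simp only [List.length_cons, List.sum_cons]
    have h1 := hv a (by simp)
    have h2 := ih (fun x hx => hv x (by simp [hx]))
    omega

lemma count_comp {v : List ℕ} (hv : ∀ a ∈ v, 0 < a) {k : ℕ} (hs : v.sum = k)
    (t : Fin k → ℕ) (n : Fin v.length → ℕ)
    (hteq : ∀ i : Fin v.sum, t (Fin.cast hs i) = n (gmap v hv i)) (c : ℕ) :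
    Set.ncard {i : Fin k | t i = c} = ∑ j : Fin v.length, if n j = c then v.get j else 0 := by
  subst hs
  rw [ncard_filter, ← count_fiber hv n c]
  congr 1
  ext i
  simp only [Finset.mem_filter, Finset.mem_univ, true_and]
  rw [show t i = n (gmap v hv i) from hteq i]

end AuxGlue

section Main
open Classical
variable {A : Type} [Fintype A]

lemma pv_recognizable (S : ANS A) (Y : Set (ℕ → ℕ))
    (h : WeaklySCodable S Y) (v : List ℕ) (hv : ∀ a ∈ v, 0 < a) :
    S.Recognizable (PvSet v Y) := by
  have hrec := h v.sum
  set φ : (Fin v.length → Option A) → (Fin v.sum → Option A) :=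
    fun f => f ∘ gmap v hv with hφ
  have h1 : IsRegularLang {w : List (Fin v.length → Option A) |
      w.map φ ∈ {w | ∃ t ∈ nuSet Y v.sum, w = padTuple fun i => S.rep (t i)}} :=
    isRegular_preimage_map φ hrec
  have h2 : IsRegularLang {w : List (Fin v.length → Option A) |
      ∀ j : {q : Fin v.length × Fin v.length // q.1 ≠ q.2}, ∃ a ∈ w, a j.1.1 ≠ a j.1.2} :=
    isRegular_forall_exists _
  refine isRegular_congr (isRegular_inter h1 h2) ?_
  intro w
  constructor
  · rintro ⟨⟨t, htmem, hmap⟩, hdist⟩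
    obtain ⟨htmono, htY⟩ := htmem
    set M := mx (fun i : Fin v.sum => S.rep (t i)) with hMdef
    have hwlen : w.length = M := by
      have := congrArg List.length hmap
      rwa [List.length_map, padTuple_length] at this
    have hentry : ∀ (p : ℕ) (hp : p < w.length) (i : Fin v.sum),
        w[p] (gmap v hv i) = (padOne M (S.rep (t i))).getD p none := by
      intro p hp i
      have hp2 : p < (w.map φ).length := by rw [List.length_map]; exact hp
      have hkey : (w.map φ)[p]'hp2
          = (padTuple fun i : Fin v.sum => S.rep (t i))[p]'(hmap ▸ hp2) := by
        have hh := hmap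
        exact List.getElem_of_eq hh hp2
      have e1 : (w.map φ)[p]'hp2 = φ (w[p]'hp) := List.getElem_map φ
      have e3 := padTuple_getElem (fun i : Fin v.sum => S.rep (t i)) p (hmap ▸ hp2) i
      calc w[p] (gmap v hv i) = φ (w[p]) i := rfl
        _ = ((w.map φ)[p]'hp2) i := by rw [e1]
        _ = ((padTuple fun i : Fin v.sum => S.rep (t i))[p]'(hmap ▸ hp2)) i := by rw [hkey]
        _ = (padOne M (S.rep (t i))).getD p none := e3
    have hconst : ∀ i i' : Fin v.sum, gmap v hv i = gmap v hv i' → t i = t i' := by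
      intro i i' hg
      apply S.inj
      rw [padOne_eq_iff_getD (M := M)
        (length_le_mx (fun i : Fin v.sum => S.rep (t i)) i)
        (length_le_mx (fun i : Fin v.sum => S.rep (t i)) i')]
      intro p hp
      rw [← hentry p (by omega) i, ← hentry p (by omega) i', hg]
    set n : Fin v.length → ℕ := fun j => t (secmap v hv j) with hn
    have hng : ∀ i, t i = n (gmap v hv i) := fun i =>
      hconst i (secmap v hv (gmap v hv i)) (gmap_secmap hv (gmap v hv i)).symm
    have hMn : mx (fun j => S.rep (n j)) = M := by
      rw [hMdef]
      have e : (fun i : Fin v.sum => S.rep (t i)) = (fun j => S.rep (n j)) ∘ gmap v hv :=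
        funext fun i => congrArg S.rep (hng i)
      rw [e, mx_comp_surj _ _ (gmap_surj hv)]
    have hw : w = padTuple (fun j => S.rep (n j)) := by
      apply List.ext_getElem
      · rw [padTuple_length, hwlen, hMn]
      · intro p h1 h2
        funext j
        have hg : gmap v hv (secmap v hv j) = j := gmap_secmap hv j
        calc w[p] j = w[p] (gmap v hv (secmap v hv j)) := by rw [hg]
          _ = (padOne M (S.rep (t (secmap v hv j)))).getD p none := hentry p h1 _
          _ = (padOne (mx fun j => S.rep (n j)) (S.rep (n j))).getD p none := by rw [hMn]
          _ = (padTuple fun j => S.rep (n j))[p] j := (padTuple_getElem _ p h2 j).symm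
    have hnmono : Monotone n := fun a b hab => htmono (secmap_mono hv hab)
    have hninj : Function.Injective n := by
      intro j1 j2 heq
      by_contra hne
      obtain ⟨a, ha, hne2⟩ := hdist ⟨(j1, j2), hne⟩
      exact padTuple_ne_of_mem _ (hw ▸ ha) hne2 (by rw [heq])
    have hnstrict := hnmono.strictMono_of_injective hninj
    refine ⟨n, ⟨hnstrict, ?_⟩, hw⟩
    have hcc : (fun c => Set.ncard {i : Fin v.sum | t i = c})
        = fun c => ∑ j : Fin v.length, if n j = c then v.get j else 0 :=
      funext fun c => count_comp hv rfl t n (fun i => hng i) c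
    exact hcc ▸ htY
  · rintro ⟨n, ⟨hnstrict, hnY⟩, rfl⟩
    constructor
    · show (padTuple fun i => S.rep (n i)).map φ
          ∈ {w | ∃ t ∈ nuSet Y v.sum, w = padTuple fun i => S.rep (t i)}
      rw [hφ, map_padTuple _ _ (gmap_surj hv)]
      refine ⟨fun i => n (gmap v hv i),
        ⟨hnstrict.monotone.comp (gmap_mono hv), ?_⟩, rfl⟩
      have hcc : (fun c => Set.ncard {i : Fin v.sum | n (gmap v hv i) = c})
          = fun c => ∑ j : Fin v.length, if n j = c then v.get j else 0 :=
        funext fun c => count_comp hv rfl (fun i => n (gmap v hv i)) n (fun i => rfl) c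
      exact hcc ▸ hnY
    · intro j
      exact padTuple_exists_ne _ (fun hc => j.2 (hnstrict.injective (S.inj hc)))

lemma nu_recognizable (S : ANS A) (Y : Set (ℕ → ℕ))
    (h : ∀ v : List ℕ, (∀ a ∈ v, 0 < a) → S.Recognizable (PvSet v Y)) (k : ℕ) :
    S.Recognizable (nuSet Y k) := by
  set vI : ((l : Fin (k+1)) × (Fin l.val → Fin (k+1))) → List ℕ :=
    fun i => List.ofFn (fun t : Fin i.1.val => (i.2 t : ℕ)) with hvI
  set L : ((l : Fin (k+1)) × (Fin l.val → Fin (k+1))) → Set (List (Fin k → Option A)) :=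
    fun i =>
      {w | ∃ v : List ℕ, v = vI i ∧ ∃ (hv : ∀ a ∈ v, 0 < a) (hs : v.sum = k)
        (u : List (Fin v.length → Option A)),
        (∃ n ∈ PvSet v Y, u = padTuple fun j => S.rep (n j)) ∧
        w = u.map (fun f => f ∘ (fun p : Fin k => gmap v hv (Fin.cast hs.symm p)))} with hL
  have hreg : ∀ i, IsRegularLang (L i) := by
    intro i
    by_cases hcond : (∀ a ∈ vI i, 0 < a) ∧ (vI i).sum = k
    · obtain ⟨hv, hs⟩ := hcond
      have himg := isRegular_image_map
        (fun f => f ∘ (fun p : Fin k => gmap (vI i) hv (Fin.cast hs.symm p))) (h (vI i) hv)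
      refine isRegular_congr himg ?_
      intro w
      constructor
      · rintro ⟨u, hu, rfl⟩
        exact ⟨vI i, rfl, hv, hs, u, hu, rfl⟩
      · rintro ⟨v, rfl, hv', hs', u, hu, rfl⟩
        exact ⟨u, hu, rfl⟩
    · refine isRegular_congr isRegular_empty ?_
      intro w
      simp only [Set.mem_empty_iff_false, false_iff]
      rintro ⟨v, rfl, hv', hs', -⟩
      exact hcond ⟨hv', hs'⟩
  refine isRegular_congr (isRegular_iUnion hreg) ?_
  intro w
  rw [Set.mem_iUnion]
  constructor
  · rintro ⟨i, v, -, hv, hs, u, ⟨n, ⟨hnstrict, hnY⟩, rfl⟩, rfl⟩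
    set g' : Fin k → Fin v.length := fun p => gmap v hv (Fin.cast hs.symm p) with hg'
    have hg'surj : Function.Surjective g' := by
      intro j
      obtain ⟨p0, hp0⟩ := gmap_surj hv j
      exact ⟨Fin.cast hs p0, hp0⟩
    refine ⟨fun p => n (g' p), ⟨?_, ?_⟩, ?_⟩
    · exact hnstrict.monotone.comp ((gmap_mono hv).comp (fun a b hab => hab))
    · have hcc : (fun c => Set.ncard {p : Fin k | n (g' p) = c})
          = fun c => ∑ j : Fin v.length, if n j = c then v.get j else 0 :=
        funext fun c => count_comp hv hs (fun p => n (g' p)) n (fun i => rfl) c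
      exact hcc ▸ hnY
    · rw [map_padTuple _ _ hg'surj]
      rfl
  · rintro ⟨t, ⟨htmono, htY⟩, rfl⟩
    obtain ⟨v, hv, hs, n, hnstrict, hteq⟩ := decomp htmono
    have hlenle : v.length ≤ v.sum := len_le_sum hv
    have hlen_lt : v.length < k + 1 := by omega
    have hget_lt : ∀ j : Fin v.length, v.get j < k + 1 := by
      intro j
      have h1 := List.single_le_sum (l := v) (fun x _ => Nat.zero_le x) _ (List.get_mem v j)
      omega
    set g' : Fin k → Fin v.length := fun p => gmap v hv (Fin.cast hs.symm p) with hg'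
    have hg'surj : Function.Surjective g' := by
      intro j
      obtain ⟨p0, hp0⟩ := gmap_surj hv j
      exact ⟨Fin.cast hs p0, hp0⟩
    refine ⟨⟨⟨v.length, hlen_lt⟩, fun j => ⟨v.get j, hget_lt j⟩⟩,
      v, (List.ofFn_get v).symm, hv, hs, _, ⟨n, ⟨hnstrict, ?_⟩, rfl⟩, ?_⟩
    · have hcc : (fun c => Set.ncard {i : Fin k | t i = c})
          = fun c => ∑ j : Fin v.length, if n j = c then v.get j else 0 :=
        funext fun c => count_comp hv hs t n hteq c
      exact hcc ▸ htY
    · rw [map_padTuple _ _ hg'surj]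
      congr 1
      funext p
      exact congrArg S.rep (hteq (Fin.cast hs.symm p))

end Main

/-- `Y ⊆ ℕ^ℕ` is weakly `S`-codable iff `P_v(Y)` is `S`-recognizable for
every finite word `v` of positive integers. -/
theorem stmt5 {A : Type} [Fintype A] (S : ANS A) (Y : Set (ℕ → ℕ)) :
    WeaklySCodable S Y ↔
      ∀ v : List ℕ, (∀ a ∈ v, 0 < a) → S.Recognizable (PvSet v Y) := by
  constructor
  · intro h v hv
    exact pv_recognizable S Y h v hv
  · intro h k
    exact nu_recognizable S Y h k
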